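/- Let W ⊂ ℝ^{2n} be an open set with a 1-form β such that dβ is symplectic, let Y be the Liouville vector field (ι_Y dβ = β), and let f, φ : W → ℝ be smooth with f − df(Y) > 0 and φ > 0. Define X_f, X_φ by ι_{X_f} dβ = df, ι_{X_φ} dβ = dφ. Then the Reeb vector field of the contact form λ = φ(f ds + β) on S¹ × W is R = (1/φ²)·( ((φ + dφ(Y))/(f − df(Y)))(∂_s + X_f) + (df(X_φ)/(f − df(Y))) Y + X_φ ), i.e. this vector field satisfies λ(R) = 1 and ι_R dλ = 0. -/
import Mathlib


/-- Pointwise (linear-algebra) form of the Reeb vector field computation for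
`λ = φ (f ds + β)` on `S¹ × W`, where `(W, β)` is a Liouville manifold with
`ω = dβ`, `Y` the Liouville field (`ι_Y ω = β`), `X_f, X_φ` the
`ω`-Hamiltonian-type fields of `f, φ` (`ι_{X_f} ω = df`, `ι_{X_φ} ω = dφ`),
and `f - df(Y) > 0`, `φ > 0`.  Then
`R = (1/φ²) ( ((φ + dφ(Y))/(f - df(Y))) (∂_s + X_f)
      + (df(X_φ)/(f - df(Y))) Y + X_φ )`
satisfies `λ(R) = 1` and `ι_R dλ = 0`, where
`dλ = (φ df + f dφ) ∧ ds + dφ ∧ β + φ ω`. -/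
theorem stmt_15 (F : Type*) [AddCommGroup F] [Module ℝ F]
    (ω : F →ₗ[ℝ] F →ₗ[ℝ] ℝ) (halt : ∀ v, ω v v = 0)
    (β df dφ : F →ₗ[ℝ] ℝ) (Y Xf Xφ : F)
    (hY : ∀ w, ω Y w = β w) (hXf : ∀ w, ω Xf w = df w)
    (hXφ : ∀ w, ω Xφ w = dφ w)
    (f φ : ℝ) (hf : 0 < f - df Y) (hφ : 0 < φ)
    (lam : ℝ × F → ℝ) (hlam : ∀ v, lam v = φ * (f * v.1 + β v.2))
    (dlam : ℝ × F → ℝ × F → ℝ)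
    (hdlam : ∀ v w, dlam v w =
      ((φ * df v.2 + f * dφ v.2) * w.1 - (φ * df w.2 + f * dφ w.2) * v.1)
        + (dφ v.2 * β w.2 - dφ w.2 * β v.2) + φ * ω v.2 w.2)
    (R : ℝ × F)
    (hR : R = ((1/φ^2) * ((φ + dφ Y) / (f - df Y)),
      (φ^2)⁻¹ • (((φ + dφ Y) / (f - df Y)) • Xf
        + (df Xφ / (f - df Y)) • Y + Xφ))) :
    lam R = 1 ∧ ∀ w : ℝ × F, dlam R w = 0 := by
  have hanti : ∀ v w, ω v w = -ω w v := by
    intro v w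
    have h := halt (v + w)
    simp [map_add, halt] at h
    linarith
  have hβY : β Y = 0 := by rw [← hY]; exact halt Y
  have hβXf : β Xf = -df Y := by rw [← hY, hanti, hXf]
  have hβXφ : β Xφ = -dφ Y := by rw [← hY, hanti, hXφ]
  have hdfXf : df Xf = 0 := by rw [← hXf]; exact halt Xf
  have hdφXφ : dφ Xφ = 0 := by rw [← hXφ]; exact halt Xφ
  have hdφXf : dφ Xf = -df Xφ := by rw [← hXφ, hanti, hXf]
  have hf' : f - df Y ≠ 0 := ne_of_gt hf
  have hφ' : φ ≠ 0 := ne_of_gt hφ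
  subst hR
  constructor
  · rw [hlam]
    simp only [map_add, map_smul, smul_eq_mul, hβY, hβXf, hβXφ]
    field_simp
    ring
  · intro w
    rw [hdlam]
    simp only [map_add, map_smul, LinearMap.add_apply, LinearMap.smul_apply,
      smul_eq_mul, hβY, hβXf, hβXφ, hdfXf, hdφXφ, hdφXf, hY, hXf, hXφ]
    field_simp
    ring
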